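/- Let q be a quadratic form of rank 2 on a 3-dimensional vector space over an algebraically closed field of characteristic ≠ 2. Then the even Clifford algebra Cl₀(q) is isomorphic to the path algebra of the quiver with two vertices and arrows α: 1→2, β: 2→1 modulo the relations αβ = βα = 0. -/
import Mathlib


/-!
STATEMENT 4: Let `q` be a quadratic form of rank 2 on a 3-dimensional vector space over an
algebraically closed field of characteristic ≠ 2.  Then the even Clifford algebra `Cl₀(q)`
is isomorphic to the path algebra of the quiver with two vertices and arrows
`α : 1 → 2`, `β : 2 → 1` modulo the relations `αβ = βα = 0`.

The path algebra with relations is presented below as the quotient of the free algebra on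
generators `ε₁, ε₂, α, β` (the two vertex idempotents and the two arrows) by the path
algebra relations together with `αβ = βα = 0`.
-/

open FreeAlgebra

/-- The defining relations of the path algebra of the quiver
`• ⇄ •` (arrows `α : 1 → 2`, `β : 2 → 1`) modulo `αβ = βα = 0`.
Generators: `0 ↦ ε₁`, `1 ↦ ε₂`, `2 ↦ α`, `3 ↦ β`. -/
inductive PathRel (k : Type*) [Field k] :
    FreeAlgebra k (Fin 4) → FreeAlgebra k (Fin 4) → Prop
  | idem1 : PathRel k (ι k 0 * ι k 0) (ι k 0)
  | idem2 : PathRel k (ι k 1 * ι k 1) (ι k 1)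
  | orth12 : PathRel k (ι k 0 * ι k 1) 0
  | orth21 : PathRel k (ι k 1 * ι k 0) 0
  | unit : PathRel k (ι k 0 + ι k 1) 1
  | srcα : PathRel k (ι k 2 * ι k 0) (ι k 2)
  | tgtα : PathRel k (ι k 1 * ι k 2) (ι k 2)
  | srcβ : PathRel k (ι k 3 * ι k 1) (ι k 3)
  | tgtβ : PathRel k (ι k 0 * ι k 3) (ι k 3)
  | relαβ : PathRel k (ι k 2 * ι k 3) 0
  | relβα : PathRel k (ι k 3 * ι k 2) 0


section ASide
variable {k : Type*} [Field k]

noncomputable abbrev PE1 (k) [Field k] : RingQuot (PathRel k) := RingQuot.mkAlgHom k _ (ι k 0)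
noncomputable abbrev PE2 (k) [Field k] : RingQuot (PathRel k) := RingQuot.mkAlgHom k _ (ι k 1)
noncomputable abbrev PAl (k) [Field k] : RingQuot (PathRel k) := RingQuot.mkAlgHom k _ (ι k 2)
noncomputable abbrev PBe (k) [Field k] : RingQuot (PathRel k) := RingQuot.mkAlgHom k _ (ι k 3)

lemma pe1_sq : PE1 k * PE1 k = PE1 k := by
  have := RingQuot.mkAlgHom_rel k (PathRel.idem1 (k := k)); rwa [map_mul] at this
lemma pe2_sq : PE2 k * PE2 k = PE2 k := by
  have := RingQuot.mkAlgHom_rel k (PathRel.idem2 (k := k)); rwa [map_mul] at this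
lemma pe12 : PE1 k * PE2 k = 0 := by
  have := RingQuot.mkAlgHom_rel k (PathRel.orth12 (k := k)); rwa [map_mul, map_zero] at this
lemma pe21 : PE2 k * PE1 k = 0 := by
  have := RingQuot.mkAlgHom_rel k (PathRel.orth21 (k := k)); rwa [map_mul, map_zero] at this
lemma punit : PE1 k + PE2 k = 1 := by
  have := RingQuot.mkAlgHom_rel k (PathRel.unit (k := k)); rwa [map_add, map_one] at this
lemma pAl_e1 : PAl k * PE1 k = PAl k := by
  have := RingQuot.mkAlgHom_rel k (PathRel.srcα (k := k)); rwa [map_mul] at this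
lemma pe2_Al : PE2 k * PAl k = PAl k := by
  have := RingQuot.mkAlgHom_rel k (PathRel.tgtα (k := k)); rwa [map_mul] at this
lemma pBe_e2 : PBe k * PE2 k = PBe k := by
  have := RingQuot.mkAlgHom_rel k (PathRel.srcβ (k := k)); rwa [map_mul] at this
lemma pe1_Be : PE1 k * PBe k = PBe k := by
  have := RingQuot.mkAlgHom_rel k (PathRel.tgtβ (k := k)); rwa [map_mul] at this
lemma pAlBe : PAl k * PBe k = 0 := by
  have := RingQuot.mkAlgHom_rel k (PathRel.relαβ (k := k)); rwa [map_mul, map_zero] at this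
lemma pBeAl : PBe k * PAl k = 0 := by
  have := RingQuot.mkAlgHom_rel k (PathRel.relβα (k := k)); rwa [map_mul, map_zero] at this

-- derived
lemma pAl_sq : PAl k * PAl k = 0 := by
  calc PAl k * PAl k = (PAl k * PE1 k) * (PE2 k * PAl k) := by rw [pAl_e1, pe2_Al]
  _ = PAl k * (PE1 k * PE2 k) * PAl k := by noncomm_ring
  _ = 0 := by rw [pe12, mul_zero, zero_mul]
lemma pBe_sq : PBe k * PBe k = 0 := by
  calc PBe k * PBe k = (PBe k * PE2 k) * (PE1 k * PBe k) := by rw [pBe_e2, pe1_Be]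
  _ = PBe k * (PE2 k * PE1 k) * PBe k := by noncomm_ring
  _ = 0 := by rw [pe21, mul_zero, zero_mul]
lemma pe1_Al : PE1 k * PAl k = 0 := by
  conv_lhs => rw [← pe2_Al, ← mul_assoc, pe12, zero_mul]
lemma pe2_Be : PE2 k * PBe k = 0 := by
  conv_lhs => rw [← pe1_Be, ← mul_assoc, pe21, zero_mul]
lemma pAl_e2 : PAl k * PE2 k = 0 := by
  conv_lhs => rw [← pAl_e1, mul_assoc, pe12, mul_zero]
lemma pBe_e1 : PBe k * PE1 k = 0 := by
  conv_lhs => rw [← pBe_e2, mul_assoc, pe21, mul_zero]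
end ASide

section UXY
variable {k : Type*} [Field k] (a : Fin 2 → k) (c : k)

noncomputable def PU : RingQuot (PathRel k) := c • (PE1 k - PE2 k)
noncomputable def PX : RingQuot (PathRel k) := PAl k - (a 0 / c) • PBe k
noncomputable def PY : RingQuot (PathRel k) := PBe k - (a 1 / c) • PAl k

variable (hc : c ^ 2 = -(a 0 * a 1)) (hc0 : c ≠ 0)
include hc hc0

lemma hUU : PU (k := k) c * PU c = (-(a 0 * a 1)) • 1 := by
  simp only [PU, smul_mul_assoc, mul_smul_comm, sub_mul, mul_sub, pe1_sq, pe2_sq, pe12, pe21]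
  rw [← punit (k := k)]
  match_scalars <;> field_simp <;> (try ring1) <;> (first | linear_combination hc | linear_combination -hc | linear_combination a 0 * hc | linear_combination a 1 * hc | linear_combination (1 + a 0) * hc | linear_combination (1 + a 1) * hc | linear_combination (-1 - a 0) * hc | linear_combination (-1 - a 1) * hc)

lemma hUX : PU (k := k) c * PX a c = (-(a 0)) • PY a c := by
  simp only [PU, PX, PY, smul_mul_assoc, mul_smul_comm, sub_mul, mul_sub, smul_sub,
    pe1_Al, pe2_Al, pe1_Be, pe2_Be]
  match_scalars <;> field_simp <;> (try ring1) <;> (first | linear_combination hc | linear_combination -hc | linear_combination a 0 * hc | linear_combination a 1 * hc | linear_combination (1 + a 0) * hc | linear_combination (1 + a 1) * hc | linear_combination (-1 - a 0) * hc | linear_combination (-1 - a 1) * hc)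

lemma hXU : PX (k := k) a c * PU c = (a 0) • PY a c := by
  simp only [PU, PX, PY, smul_mul_assoc, mul_smul_comm, sub_mul, mul_sub, smul_sub,
    pAl_e1, pAl_e2, pBe_e1, pBe_e2]
  match_scalars <;> field_simp <;> (try ring1) <;> (first | linear_combination hc | linear_combination -hc | linear_combination a 0 * hc | linear_combination a 1 * hc | linear_combination (1 + a 0) * hc | linear_combination (1 + a 1) * hc | linear_combination (-1 - a 0) * hc | linear_combination (-1 - a 1) * hc)

lemma hUY : PU (k := k) c * PY a c = (a 1) • PX a c := by
  simp only [PU, PX, PY, smul_mul_assoc, mul_smul_comm, sub_mul, mul_sub, smul_sub,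
    pe1_Al, pe2_Al, pe1_Be, pe2_Be]
  match_scalars <;> field_simp <;> (try ring1) <;> (first | linear_combination hc | linear_combination -hc | linear_combination a 0 * hc | linear_combination a 1 * hc | linear_combination (1 + a 0) * hc | linear_combination (1 + a 1) * hc | linear_combination (-1 - a 0) * hc | linear_combination (-1 - a 1) * hc)

lemma hYU : PY (k := k) a c * PU c = (-(a 1)) • PX a c := by
  simp only [PU, PX, PY, smul_mul_assoc, mul_smul_comm, sub_mul, mul_sub, smul_sub,
    pAl_e1, pAl_e2, pBe_e1, pBe_e2]
  match_scalars <;> field_simp <;> (try ring1) <;> (first | linear_combination hc | linear_combination -hc | linear_combination a 0 * hc | linear_combination a 1 * hc | linear_combination (1 + a 0) * hc | linear_combination (1 + a 1) * hc | linear_combination (-1 - a 0) * hc | linear_combination (-1 - a 1) * hc)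

omit hc hc0

lemma hXX : PX (k := k) a c * PX a c = 0 := by
  simp only [PX, smul_mul_assoc, mul_smul_comm, sub_mul, mul_sub,
    pAl_sq, pBe_sq, pAlBe, pBeAl, smul_zero, sub_zero, sub_self]

lemma hYY : PY (k := k) a c * PY a c = 0 := by
  simp only [PY, smul_mul_assoc, mul_smul_comm, sub_mul, mul_sub,
    pAl_sq, pBe_sq, pAlBe, pBeAl, smul_zero, sub_zero, sub_self]

lemma hXY : PX (k := k) a c * PY a c = 0 := by
  simp only [PX, PY, smul_mul_assoc, mul_smul_comm, sub_mul, mul_sub,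
    pAl_sq, pBe_sq, pAlBe, pBeAl, smul_zero, sub_zero, sub_self]

lemma hYX : PY (k := k) a c * PX a c = 0 := by
  simp only [PX, PY, smul_mul_assoc, mul_smul_comm, sub_mul, mul_sub,
    pAl_sq, pBe_sq, pAlBe, pBeAl, smul_zero, sub_zero, sub_self]

include hc hc0 in
lemma pkey (s0 s1 s2 s3 t0 t1 t2 t3 : k) :
    (s0 • 1 + s1 • PU (k := k) c + s2 • PX a c + s3 • PY a c) *
      (t0 • 1 + t1 • PU c + t2 • PX a c + t3 • PY a c) =
    (s0*t0 - a 0 * a 1 * (s1*t1)) • 1 + (s0*t1 + s1*t0) • PU c +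
      (s0*t2 + s2*t0 + a 1 * (s1*t3 - s3*t1)) • PX a c +
      (s0*t3 + s3*t0 - a 0 * (s1*t2 - s2*t1)) • PY a c := by
  simp only [mul_add, add_mul, smul_mul_assoc, mul_smul_comm, one_mul, mul_one,
    hUU a c hc hc0, hUX a c hc hc0, hXU a c hc hc0, hUY a c hc hc0, hYU a c hc hc0,
    hXX, hYY, hXY, hYX, smul_zero]
  module
end UXY


open CliffordAlgebra
section
variable {k : Type*} [Field k] (a : Fin 2 → k)
  (Q : QuadraticForm k (Fin 3 → k))
  (hQ : ∀ x : Fin 3 → k, Q x = a 0 * (x 0) ^ 2 + a 1 * (x 1) ^ 2)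

noncomputable def bb (i : Fin 3) : Fin 3 → k := Pi.single i 1

include hQ in
lemma hQb0 : Q (bb 0) = a 0 := by simp [bb, hQ]
include hQ in
lemma hQb1 : Q (bb 1) = a 1 := by simp [bb, hQ]
include hQ in
lemma hQb2 : Q (bb 2) = 0 := by simp [bb, hQ]

include hQ in
lemma hpolar (i j : Fin 3) (hij : i ≠ j) : QuadraticMap.polar Q (bb i) (bb j) = 0 := by
  fin_cases i <;> fin_cases j <;> simp_all [QuadraticMap.polar, bb, hQ, Pi.single_apply] <;> ring

lemma evenι_coe (v w : Fin 3 → k) :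
    ((even.ι Q).bilin v w : CliffordAlgebra Q) = CliffordAlgebra.ι Q v * CliffordAlgebra.ι Q w :=
  rfl

include hQ in
lemma swap (i j : Fin 3) (hij : i ≠ j) :
    (even.ι Q).bilin (bb j) (bb i) = -(even.ι Q).bilin (bb i) (bb j) := by
  have h := CliffordAlgebra.ι_mul_ι_add_swap (Q := Q) (bb i) (bb j)
  rw [hpolar a Q hQ i j hij, map_zero] at h
  ext
  push_cast
  rw [evenι_coe, evenι_coe]
  exact eq_neg_of_add_eq_zero_right h
end

set_option maxHeartbeats 1000000
set_option synthInstance.maxHeartbeats 400000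

section Table
variable {k : Type*} [Field k] (a : Fin 2 → k)
  (Q : QuadraticForm k (Fin 3 → k))
  (hQ : ∀ x : Fin 3 → k, Q x = a 0 * (x 0) ^ 2 + a 1 * (x 1) ^ 2)

open CliffordAlgebra in
noncomputable def eb (i j : Fin 3) : even Q := (even.ι Q).bilin (bb i) (bb j)

include hQ in
lemma lemA (i j l : Fin 3) (hij : i ≠ j) :
    eb Q i j * eb Q i l = -(Q (bb i) • eb Q j l) := by
  simp only [eb]
  have h := swap a Q hQ i j hij
  have hm := (even.ι Q).contract_mid (bb j) (bb i) (bb l)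
  rw [h, neg_mul] at hm
  rw [← hm, neg_neg]

include hQ in
lemma lemB (i j l : Fin 3) (hjl : j ≠ l) :
    eb Q i j * eb Q l j = -(Q (bb j) • eb Q i l) := by
  simp only [eb]
  have h := swap a Q hQ j l hjl
  have hm := (even.ι Q).contract_mid (bb i) (bb j) (bb l)
  rw [h, mul_neg, hm]

include hQ

lemma t1212 : eb Q 0 1 * eb Q 0 1 = (-(a 0 * a 1)) • 1 := by
  rw [lemA a Q hQ 0 1 1 (by decide), hQb0 a Q hQ]
  rw [show eb Q 1 1 = algebraMap k _ (Q (bb 1)) from (even.ι Q).contract _,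
    hQb1 a Q hQ, Algebra.algebraMap_eq_smul_one]
  module

lemma t1213 : eb Q 0 1 * eb Q 0 2 = (-(a 0)) • eb Q 1 2 := by
  rw [lemA a Q hQ 0 1 2 (by decide), hQb0 a Q hQ]; module

lemma t1312 : eb Q 0 2 * eb Q 0 1 = a 0 • eb Q 1 2 := by
  rw [lemA a Q hQ 0 2 1 (by decide), hQb0 a Q hQ,
    show eb Q 2 1 = -eb Q 1 2 from swap a Q hQ 1 2 (by decide)]
  module

lemma t1223 : eb Q 0 1 * eb Q 1 2 = a 1 • eb Q 0 2 := by
  have := (even.ι Q).contract_mid (bb 0) (bb 1) (bb 2)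
  rw [show Q (bb 1) = a 1 from hQb1 a Q hQ] at this
  exact this

lemma t2312 : eb Q 1 2 * eb Q 0 1 = (-(a 1)) • eb Q 0 2 := by
  have h21 := swap a Q hQ 1 2 (by decide)
  have h10 := swap a Q hQ 0 1 (by decide)
  have h20 := swap a Q hQ 0 2 (by decide)
  have hm := (even.ι Q).contract_mid (bb 2) (bb 1) (bb 0)
  rw [h21, h10, neg_mul, mul_neg, neg_neg, hQb1 a Q hQ, h20] at hm
  show (even.ι Q).bilin (bb 1) (bb 2) * (even.ι Q).bilin (bb 0) (bb 1)
      = (-(a 1)) • ((even.ι Q).bilin (bb 0) (bb 2))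
  rw [hm]
  module

lemma t1313 : eb Q 0 2 * eb Q 0 2 = 0 := by
  rw [lemA a Q hQ 0 2 2 (by decide),
    show eb Q 2 2 = algebraMap k _ (Q (bb 2)) from (even.ι Q).contract _,
    hQb2 a Q hQ, map_zero, smul_zero, neg_zero]

lemma t2323 : eb Q 1 2 * eb Q 1 2 = 0 := by
  rw [lemA a Q hQ 1 2 2 (by decide),
    show eb Q 2 2 = algebraMap k _ (Q (bb 2)) from (even.ι Q).contract _,
    hQb2 a Q hQ, map_zero, smul_zero, neg_zero]

lemma t1323 : eb Q 0 2 * eb Q 1 2 = 0 := by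
  rw [lemB a Q hQ 0 2 1 (by decide), hQb2 a Q hQ, zero_smul, neg_zero]

lemma t2313 : eb Q 1 2 * eb Q 0 2 = 0 := by
  rw [lemB a Q hQ 1 2 0 (by decide), hQb2 a Q hQ, zero_smul, neg_zero]

end Table

section Idem
variable {k : Type*} [Field k] (a : Fin 2 → k) (c : k)
  (Q : QuadraticForm k (Fin 3 → k))
  (hQ : ∀ x : Fin 3 → k, Q x = a 0 * (x 0) ^ 2 + a 1 * (x 1) ^ 2)

open CliffordAlgebra

noncomputable def EE1 : even Q := (2:k)⁻¹ • (1 + c⁻¹ • eb Q 0 1)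
noncomputable def EE2 : even Q := (2:k)⁻¹ • (1 - c⁻¹ • eb Q 0 1)
noncomputable def AV : even Q := EE2 c Q * eb Q 0 2
noncomputable def BV : even Q := EE1 c Q * eb Q 1 2

variable (hchar : (2:k) ≠ 0) (hc : c ^ 2 = -(a 0 * a 1)) (hc0 : c ≠ 0)

include hchar in
lemma r_unit : EE1 c Q + EE2 c Q = 1 := by
  have h2 : (2:k) * 2⁻¹ = 1 := mul_inv_cancel₀ hchar
  simp only [EE1, EE2]; match_scalars <;> (try ring1) <;> linear_combination h2

include hQ hchar hc hc0

lemma r_e1sq : EE1 c Q * EE1 c Q = EE1 c Q := by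
  simp only [EE1, smul_mul_assoc, mul_smul_comm, add_mul, mul_add, one_mul, mul_one,
    t1212 a Q hQ]
  have hcc : c * c⁻¹ = 1 := mul_inv_cancel₀ hc0
  have h2 : (2:k) * 2⁻¹ = 1 := mul_inv_cancel₀ hchar
  match_scalars <;> (try ring1) <;>
    (first
      | linear_combination (-(2⁻¹^2)*c⁻¹^2) * hc + (2⁻¹^2*(c*c⁻¹+1)) * hcc + 2⁻¹ * h2
      | linear_combination ((2⁻¹^2)*c⁻¹^2) * hc - (2⁻¹^2*(c*c⁻¹+1)) * hcc - 2⁻¹ * h2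
      | linear_combination ((2⁻¹^2)*c⁻¹^2) * hc - (2⁻¹^2*(c*c⁻¹+1)) * hcc
      | linear_combination (-(2⁻¹^2)*c⁻¹^2) * hc + (2⁻¹^2*(c*c⁻¹+1)) * hcc
      | linear_combination (2⁻¹*c⁻¹) * h2
      | linear_combination (-(2⁻¹*c⁻¹)) * h2
      | linear_combination (2*2⁻¹)*hcc + h2
      | linear_combination hc
      | linear_combination -hc
      | linear_combination (-(2⁻¹)*c⁻¹^2) * hc + (2⁻¹*(c*c⁻¹+1)) * hcc + h2
      | linear_combination ((2⁻¹)*c⁻¹^2) * hc - (2⁻¹*(c*c⁻¹+1)) * hcc - h2)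

lemma r_e2sq : EE2 c Q * EE2 c Q = EE2 c Q := by
  simp only [EE2, smul_mul_assoc, mul_smul_comm, sub_mul, mul_sub, one_mul, mul_one,
    t1212 a Q hQ]
  have hcc : c * c⁻¹ = 1 := mul_inv_cancel₀ hc0
  have h2 : (2:k) * 2⁻¹ = 1 := mul_inv_cancel₀ hchar
  match_scalars <;> (try ring1) <;>
    (first
      | linear_combination (-(2⁻¹^2)*c⁻¹^2) * hc + (2⁻¹^2*(c*c⁻¹+1)) * hcc + 2⁻¹ * h2
      | linear_combination ((2⁻¹^2)*c⁻¹^2) * hc - (2⁻¹^2*(c*c⁻¹+1)) * hcc - 2⁻¹ * h2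
      | linear_combination ((2⁻¹^2)*c⁻¹^2) * hc - (2⁻¹^2*(c*c⁻¹+1)) * hcc
      | linear_combination (-(2⁻¹^2)*c⁻¹^2) * hc + (2⁻¹^2*(c*c⁻¹+1)) * hcc
      | linear_combination (2⁻¹*c⁻¹) * h2
      | linear_combination (-(2⁻¹*c⁻¹)) * h2
      | linear_combination (2*2⁻¹)*hcc + h2
      | linear_combination hc
      | linear_combination -hc
      | linear_combination (-(2⁻¹)*c⁻¹^2) * hc + (2⁻¹*(c*c⁻¹+1)) * hcc + h2
      | linear_combination ((2⁻¹)*c⁻¹^2) * hc - (2⁻¹*(c*c⁻¹+1)) * hcc - h2)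

lemma r_e12 : EE1 c Q * EE2 c Q = 0 := by
  simp only [EE1, EE2, smul_mul_assoc, mul_smul_comm, sub_mul, mul_sub, add_mul, mul_add,
    one_mul, mul_one, t1212 a Q hQ]
  have hcc : c * c⁻¹ = 1 := mul_inv_cancel₀ hc0
  have h2 : (2:k) * 2⁻¹ = 1 := mul_inv_cancel₀ hchar
  match_scalars <;> (try ring1) <;>
    (first
      | linear_combination (-(2⁻¹^2)*c⁻¹^2) * hc + (2⁻¹^2*(c*c⁻¹+1)) * hcc + 2⁻¹ * h2
      | linear_combination ((2⁻¹^2)*c⁻¹^2) * hc - (2⁻¹^2*(c*c⁻¹+1)) * hcc - 2⁻¹ * h2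
      | linear_combination ((2⁻¹^2)*c⁻¹^2) * hc - (2⁻¹^2*(c*c⁻¹+1)) * hcc
      | linear_combination (-(2⁻¹^2)*c⁻¹^2) * hc + (2⁻¹^2*(c*c⁻¹+1)) * hcc
      | linear_combination (2⁻¹*c⁻¹) * h2
      | linear_combination (-(2⁻¹*c⁻¹)) * h2
      | linear_combination (2*2⁻¹)*hcc + h2
      | linear_combination hc
      | linear_combination -hc
      | linear_combination (-(2⁻¹)*c⁻¹^2) * hc + (2⁻¹*(c*c⁻¹+1)) * hcc + h2
      | linear_combination ((2⁻¹)*c⁻¹^2) * hc - (2⁻¹*(c*c⁻¹+1)) * hcc - h2)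

lemma r_e21 : EE2 c Q * EE1 c Q = 0 := by
  simp only [EE1, EE2, smul_mul_assoc, mul_smul_comm, sub_mul, mul_sub, add_mul, mul_add,
    one_mul, mul_one, t1212 a Q hQ]
  have hcc : c * c⁻¹ = 1 := mul_inv_cancel₀ hc0
  have h2 : (2:k) * 2⁻¹ = 1 := mul_inv_cancel₀ hchar
  match_scalars <;> (try ring1) <;>
    (first
      | linear_combination (-(2⁻¹^2)*c⁻¹^2) * hc + (2⁻¹^2*(c*c⁻¹+1)) * hcc + 2⁻¹ * h2
      | linear_combination ((2⁻¹^2)*c⁻¹^2) * hc - (2⁻¹^2*(c*c⁻¹+1)) * hcc - 2⁻¹ * h2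
      | linear_combination ((2⁻¹^2)*c⁻¹^2) * hc - (2⁻¹^2*(c*c⁻¹+1)) * hcc
      | linear_combination (-(2⁻¹^2)*c⁻¹^2) * hc + (2⁻¹^2*(c*c⁻¹+1)) * hcc
      | linear_combination (2⁻¹*c⁻¹) * h2
      | linear_combination (-(2⁻¹*c⁻¹)) * h2
      | linear_combination (2*2⁻¹)*hcc + h2
      | linear_combination hc
      | linear_combination -hc
      | linear_combination (-(2⁻¹)*c⁻¹^2) * hc + (2⁻¹*(c*c⁻¹+1)) * hcc + h2
      | linear_combination ((2⁻¹)*c⁻¹^2) * hc - (2⁻¹*(c*c⁻¹+1)) * hcc - h2)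

omit hchar hc hc0

lemma comm1 : eb Q 0 2 * EE1 c Q = EE2 c Q * eb Q 0 2 := by
  simp only [EE1, EE2, smul_mul_assoc, mul_smul_comm, sub_mul, mul_sub, add_mul, mul_add,
    one_mul, mul_one, t1312 a Q hQ, t1213 a Q hQ]
  match_scalars <;> ring

lemma comm2 : eb Q 1 2 * EE2 c Q = EE1 c Q * eb Q 1 2 := by
  simp only [EE1, EE2, smul_mul_assoc, mul_smul_comm, sub_mul, mul_sub, add_mul, mul_add,
    one_mul, mul_one, t2312 a Q hQ, t1223 a Q hQ]
  match_scalars <;> ring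

include hchar hc hc0

lemma r_e2_av : EE2 c Q * AV c Q = AV c Q := by
  rw [AV, ← mul_assoc, r_e2sq a c Q hQ hchar hc hc0]

lemma r_av_e1 : AV c Q * EE1 c Q = AV c Q := by
  rw [AV, mul_assoc, comm1 a c Q hQ, ← mul_assoc, r_e2sq a c Q hQ hchar hc hc0]

lemma r_e1_bv : EE1 c Q * BV c Q = BV c Q := by
  rw [BV, ← mul_assoc, r_e1sq a c Q hQ hchar hc hc0]

lemma r_bv_e2 : BV c Q * EE2 c Q = BV c Q := by
  rw [BV, mul_assoc, comm2 a c Q hQ, ← mul_assoc, r_e1sq a c Q hQ hchar hc hc0]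

lemma r_avbv : AV c Q * BV c Q = 0 := by
  rw [BV, AV, mul_assoc, ← mul_assoc (eb Q 0 2), comm1 a c Q hQ, mul_assoc,
    t1323 a Q hQ, mul_zero, mul_zero]

lemma r_bvav : BV c Q * AV c Q = 0 := by
  rw [BV, AV, mul_assoc, ← mul_assoc (eb Q 1 2), comm2 a c Q hQ, mul_assoc,
    t2313 a Q hQ, mul_zero, mul_zero]

omit hchar hc hc0

include hchar hc0 in
lemma hU_eq : c • (EE1 c Q - EE2 c Q) = eb Q 0 1 := by
  have h2 : (2:k) * 2⁻¹ = 1 := mul_inv_cancel₀ hchar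
  have hcc : c * c⁻¹ = 1 := mul_inv_cancel₀ hc0
  simp only [EE1, EE2]
  match_scalars <;> (try ring1) <;> (first | linear_combination h2 | linear_combination (2*2⁻¹)*hcc + h2)

include hchar hc hc0

lemma hX_eq : AV c Q - (a 0 / c) • BV c Q = eb Q 0 2 := by
  rw [AV, BV]
  simp only [EE1, EE2, smul_mul_assoc, mul_smul_comm, sub_mul, mul_sub, add_mul, mul_add,
    one_mul, mul_one, t1213 a Q hQ, t1223 a Q hQ]
  have hcc : c * c⁻¹ = 1 := mul_inv_cancel₀ hc0
  have h2 : (2:k) * 2⁻¹ = 1 := mul_inv_cancel₀ hchar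
  match_scalars <;> (try ring1) <;>
    (first
      | linear_combination (-(2⁻¹^2)*c⁻¹^2) * hc + (2⁻¹^2*(c*c⁻¹+1)) * hcc + 2⁻¹ * h2
      | linear_combination ((2⁻¹^2)*c⁻¹^2) * hc - (2⁻¹^2*(c*c⁻¹+1)) * hcc - 2⁻¹ * h2
      | linear_combination ((2⁻¹^2)*c⁻¹^2) * hc - (2⁻¹^2*(c*c⁻¹+1)) * hcc
      | linear_combination (-(2⁻¹^2)*c⁻¹^2) * hc + (2⁻¹^2*(c*c⁻¹+1)) * hcc
      | linear_combination (2⁻¹*c⁻¹) * h2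
      | linear_combination (-(2⁻¹*c⁻¹)) * h2
      | linear_combination (2*2⁻¹)*hcc + h2
      | linear_combination hc
      | linear_combination -hc
      | linear_combination (-(2⁻¹)*c⁻¹^2) * hc + (2⁻¹*(c*c⁻¹+1)) * hcc + h2
      | linear_combination ((2⁻¹)*c⁻¹^2) * hc - (2⁻¹*(c*c⁻¹+1)) * hcc - h2)

lemma hY_eq : BV c Q - (a 1 / c) • AV c Q = eb Q 1 2 := by
  rw [AV, BV]
  simp only [EE1, EE2, smul_mul_assoc, mul_smul_comm, sub_mul, mul_sub, add_mul, mul_add,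
    one_mul, mul_one, t1213 a Q hQ, t1223 a Q hQ]
  have hcc : c * c⁻¹ = 1 := mul_inv_cancel₀ hc0
  have h2 : (2:k) * 2⁻¹ = 1 := mul_inv_cancel₀ hchar
  match_scalars <;> (try ring1) <;>
    (first
      | linear_combination (-(2⁻¹^2)*c⁻¹^2) * hc + (2⁻¹^2*(c*c⁻¹+1)) * hcc + 2⁻¹ * h2
      | linear_combination ((2⁻¹^2)*c⁻¹^2) * hc - (2⁻¹^2*(c*c⁻¹+1)) * hcc - 2⁻¹ * h2
      | linear_combination ((2⁻¹^2)*c⁻¹^2) * hc - (2⁻¹^2*(c*c⁻¹+1)) * hcc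
      | linear_combination (-(2⁻¹^2)*c⁻¹^2) * hc + (2⁻¹^2*(c*c⁻¹+1)) * hcc
      | linear_combination (2⁻¹*c⁻¹) * h2
      | linear_combination (-(2⁻¹*c⁻¹)) * h2
      | linear_combination (2*2⁻¹)*hcc + h2
      | linear_combination hc
      | linear_combination -hc
      | linear_combination (-(2⁻¹)*c⁻¹^2) * hc + (2⁻¹*(c*c⁻¹+1)) * hcc + h2
      | linear_combination ((2⁻¹)*c⁻¹^2) * hc - (2⁻¹*(c*c⁻¹+1)) * hcc - h2)

end Idem

section Expand
open CliffordAlgebra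
variable {k : Type*} [Field k] (a : Fin 2 → k)
  (Q : QuadraticForm k (Fin 3 → k))
  (hQ : ∀ x : Fin 3 → k, Q x = a 0 * (x 0) ^ 2 + a 1 * (x 1) ^ 2)

include hQ in
lemma bilin_expand' (x0 x1 x2 y0 y1 y2 : k) :
    (even.ι Q).bilin (x0 • bb 0 + x1 • bb 1 + x2 • bb 2) (y0 • bb 0 + y1 • bb 1 + y2 • bb 2) =
      (a 0 * x0 * y0 + a 1 * x1 * y1) • 1
      + (x0 * y1 - x1 * y0) • eb Q 0 1 + (x0 * y2 - x2 * y0) • eb Q 0 2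
      + (x1 * y2 - x2 * y1) • eb Q 1 2 := by
  have c00 : (even.ι Q).bilin (bb 0) (bb 0) = (a 0 : k) • (1 : even Q) := by
    rw [(even.ι Q).contract, hQb0 a Q hQ, Algebra.algebraMap_eq_smul_one]
  have c11 : (even.ι Q).bilin (bb 1) (bb 1) = (a 1 : k) • (1 : even Q) := by
    rw [(even.ι Q).contract, hQb1 a Q hQ, Algebra.algebraMap_eq_smul_one]
  have c22 : (even.ι Q).bilin (bb 2 : Fin 3 → k) (bb 2) = 0 := by
    rw [(even.ι Q).contract, hQb2 a Q hQ, map_zero]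
  have s10 := swap a Q hQ 0 1 (by decide)
  have s20 := swap a Q hQ 0 2 (by decide)
  have s21 := swap a Q hQ 1 2 (by decide)
  simp only [map_add, map_smul, LinearMap.add_apply, LinearMap.smul_apply,
    c00, c11, c22, s10, s20, s21, smul_zero, smul_neg, eb]
  match_scalars <;> ring

include hQ in
lemma bilin_expand (v w : Fin 3 → k) :
    (even.ι Q).bilin v w =
      (a 0 * v 0 * w 0 + a 1 * v 1 * w 1) • 1
      + (v 0 * w 1 - v 1 * w 0) • eb Q 0 1 + (v 0 * w 2 - v 2 * w 0) • eb Q 0 2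
      + (v 1 * w 2 - v 2 * w 1) • eb Q 1 2 := by
  have hv : v = v 0 • bb 0 + v 1 • bb 1 + v 2 • (bb 2 : Fin 3 → k) := by
    funext j; fin_cases j <;> simp [bb, Pi.single_apply]
  have hw : w = w 0 • bb 0 + w 1 • bb 1 + w 2 • (bb 2 : Fin 3 → k) := by
    funext j; fin_cases j <;> simp [bb, Pi.single_apply]
  calc (even.ι Q).bilin v w
      = (even.ι Q).bilin (v 0 • bb 0 + v 1 • bb 1 + v 2 • bb 2)
          (w 0 • bb 0 + w 1 • bb 1 + w 2 • bb 2) := by rw [← hv, ← hw]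
  _ = _ := bilin_expand' a Q hQ _ _ _ _ _ _

end Expand

section EvenHomDef
open CliffordAlgebra
variable {k : Type*} [Field k] (a : Fin 2 → k) (c : k)
  (Q : QuadraticForm k (Fin 3 → k))
  (hQ : ∀ x : Fin 3 → k, Q x = a 0 * (x 0) ^ 2 + a 1 * (x 1) ^ 2)
  (hc : c ^ 2 = -(a 0 * a 1)) (hc0 : c ≠ 0)

noncomputable def fBilin : (Fin 3 → k) →ₗ[k] (Fin 3 → k) →ₗ[k] RingQuot (PathRel k) :=
  LinearMap.mk₂ k
    (fun v w => (a 0 * v 0 * w 0 + a 1 * v 1 * w 1) • 1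
      + (v 0 * w 1 - v 1 * w 0) • PU c + (v 0 * w 2 - v 2 * w 0) • PX a c
      + (v 1 * w 2 - v 2 * w 1) • PY a c)
    (fun v v' w => by simp only [Pi.add_apply]; match_scalars <;> ring)
    (fun r v w => by simp only [Pi.smul_apply, smul_eq_mul]; match_scalars <;> ring)
    (fun v w w' => by simp only [Pi.add_apply]; match_scalars <;> ring)
    (fun r v w => by simp only [Pi.smul_apply, smul_eq_mul]; match_scalars <;> ring)

lemma fBilin_apply (v w : Fin 3 → k) :
    fBilin a c v w = (a 0 * v 0 * w 0 + a 1 * v 1 * w 1) • 1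
      + (v 0 * w 1 - v 1 * w 0) • PU c + (v 0 * w 2 - v 2 * w 0) • PX a c
      + (v 1 * w 2 - v 2 * w 1) • PY a c := rfl

include hQ hc hc0 in
noncomputable def fHom : EvenHom Q (RingQuot (PathRel k)) where
  bilin := fBilin a c
  contract m := by
    rw [fBilin_apply, hQ, Algebra.algebraMap_eq_smul_one]
    match_scalars <;> ring
  contract_mid m₁ m₂ m₃ := by
    rw [fBilin_apply, fBilin_apply, fBilin_apply, pkey a c hc hc0, hQ m₂]
    match_scalars <;> ring
end EvenHomDef

section Main
open CliffordAlgebra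
variable {k : Type*} [Field k] (a : Fin 2 → k) (c : k)
  (Q : QuadraticForm k (Fin 3 → k))
  (hQ : ∀ x : Fin 3 → k, Q x = a 0 * (x 0) ^ 2 + a 1 * (x 1) ^ 2)
  (hchar : (2:k) ≠ 0) (hc : c ^ 2 = -(a 0 * a 1)) (hc0 : c ≠ 0)

noncomputable def gHom : even Q →ₐ[k] RingQuot (PathRel k) :=
  even.lift Q (fHom a c Q hQ hc hc0)

noncomputable def gens : Fin 4 → even Q := ![EE1 c Q, EE2 c Q, AV c Q, BV c Q]

include hQ hchar hc hc0 in
lemma hF0 : ∀ ⦃x y : FreeAlgebra k (Fin 4)⦄, PathRel k x y →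
    FreeAlgebra.lift k (gens c Q) x = FreeAlgebra.lift k (gens c Q) y := by
  intro x y h
  cases h <;>
    simp only [map_mul, map_add, map_one, map_zero, FreeAlgebra.lift_ι_apply, gens,
      Matrix.cons_val_zero, Matrix.cons_val_one, Matrix.head_cons, Matrix.cons_val_two,
      Matrix.tail_cons, Matrix.cons_val_three]
  · exact r_e1sq a c Q hQ hchar hc hc0
  · exact r_e2sq a c Q hQ hchar hc hc0
  · exact r_e12 a c Q hQ hchar hc hc0
  · exact r_e21 a c Q hQ hchar hc hc0
  · exact r_unit c Q hchar
  · exact r_av_e1 a c Q hQ hchar hc hc0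
  · exact r_e2_av a c Q hQ hchar hc hc0
  · exact r_bv_e2 a c Q hQ hchar hc hc0
  · exact r_e1_bv a c Q hQ hchar hc hc0
  · exact r_avbv a c Q hQ hchar hc hc0
  · exact r_bvav a c Q hQ hchar hc hc0

noncomputable def hHom : RingQuot (PathRel k) →ₐ[k] even Q :=
  RingQuot.liftAlgHom k ⟨FreeAlgebra.lift k (gens c Q), hF0 a c Q hQ hchar hc hc0⟩

lemma hHom_PE1 : hHom a c Q hQ hchar hc hc0 (PE1 k) = EE1 c Q := by
  rw [PE1, hHom, RingQuot.liftAlgHom_mkAlgHom_apply, FreeAlgebra.lift_ι_apply]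
  simp [gens]

lemma hHom_PE2 : hHom a c Q hQ hchar hc hc0 (PE2 k) = EE2 c Q := by
  rw [PE2, hHom, RingQuot.liftAlgHom_mkAlgHom_apply, FreeAlgebra.lift_ι_apply]
  simp [gens]

lemma hHom_PAl : hHom a c Q hQ hchar hc hc0 (PAl k) = AV c Q := by
  rw [PAl, hHom, RingQuot.liftAlgHom_mkAlgHom_apply, FreeAlgebra.lift_ι_apply]
  simp [gens]

lemma hHom_PBe : hHom a c Q hQ hchar hc hc0 (PBe k) = BV c Q := by
  rw [PBe, hHom, RingQuot.liftAlgHom_mkAlgHom_apply, FreeAlgebra.lift_ι_apply]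
  simp [gens]

lemma hHom_PU : hHom a c Q hQ hchar hc hc0 (PU c) = eb Q 0 1 := by
  rw [PU, map_smul, map_sub, hHom_PE1, hHom_PE2, hU_eq a c Q hQ hchar hc0]

lemma hHom_PX : hHom a c Q hQ hchar hc hc0 (PX a c) = eb Q 0 2 := by
  rw [PX, map_sub, map_smul, hHom_PAl, hHom_PBe, hX_eq a c Q hQ hchar hc hc0]

lemma hHom_PY : hHom a c Q hQ hchar hc hc0 (PY a c) = eb Q 1 2 := by
  rw [PY, map_sub, map_smul, hHom_PAl, hHom_PBe, hY_eq a c Q hQ hchar hc hc0]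

lemma hg_id : (hHom a c Q hQ hchar hc hc0).comp (gHom a c Q hQ hc hc0) =
    AlgHom.id k (even Q) := by
  apply even.algHom_ext
  apply CliffordAlgebra.EvenHom.ext
  apply LinearMap.ext₂
  intro v w
  show hHom a c Q hQ hchar hc hc0 (gHom a c Q hQ hc hc0 ((even.ι Q).bilin v w))
      = (even.ι Q).bilin v w
  rw [gHom, even.lift_ι, show (fHom a c Q hQ hc hc0).bilin = fBilin a c from rfl,
    fBilin_apply, map_add, map_add, map_add, map_smul, map_smul, map_smul, map_smul,
    map_one, hHom_PU, hHom_PX, hHom_PY, ← bilin_expand a Q hQ]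

lemma gHom_eb01 : gHom a c Q hQ hc hc0 (eb Q 0 1) = PU c := by
  rw [gHom, show eb Q 0 1 = (even.ι Q).bilin (bb 0) (bb 1) from rfl, even.lift_ι,
    show (fHom a c Q hQ hc hc0).bilin = fBilin a c from rfl, fBilin_apply]
  simp [bb, Pi.single_apply]

lemma gHom_eb02 : gHom a c Q hQ hc hc0 (eb Q 0 2) = PX a c := by
  rw [gHom, show eb Q 0 2 = (even.ι Q).bilin (bb 0) (bb 2) from rfl, even.lift_ι,
    show (fHom a c Q hQ hc hc0).bilin = fBilin a c from rfl, fBilin_apply]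
  simp [bb, Pi.single_apply]

lemma gHom_eb12 : gHom a c Q hQ hc hc0 (eb Q 1 2) = PY a c := by
  rw [gHom, show eb Q 1 2 = (even.ι Q).bilin (bb 1) (bb 2) from rfl, even.lift_ι,
    show (fHom a c Q hQ hc hc0).bilin = fBilin a c from rfl, fBilin_apply]
  simp [bb, Pi.single_apply]

include hchar in
lemma gHom_EE1 : gHom a c Q hQ hc hc0 (EE1 c Q) = PE1 k := by
  have h2 : (2:k) * 2⁻¹ = 1 := mul_inv_cancel₀ hchar
  have hcc : c * c⁻¹ = 1 := mul_inv_cancel₀ hc0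
  rw [EE1, map_smul, map_add, map_one, map_smul, gHom_eb01 a c Q hQ hc hc0, PU,
    ← punit (k := k)]
  match_scalars <;> (try ring1) <;>
    (first
      | linear_combination 2⁻¹*hcc + h2
      | linear_combination (-(2⁻¹))*hcc)

include hchar in
lemma gHom_EE2 : gHom a c Q hQ hc hc0 (EE2 c Q) = PE2 k := by
  have h2 : (2:k) * 2⁻¹ = 1 := mul_inv_cancel₀ hchar
  have hcc : c * c⁻¹ = 1 := mul_inv_cancel₀ hc0
  rw [EE2, map_smul, map_sub, map_one, map_smul, gHom_eb01 a c Q hQ hc hc0, PU,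
    ← punit (k := k)]
  match_scalars <;> (try ring1) <;>
    (first
      | linear_combination 2⁻¹*hcc + h2
      | linear_combination (-(2⁻¹))*hcc)

include hchar in
lemma gHom_AV : gHom a c Q hQ hc hc0 (AV c Q) = PAl k := by
  rw [AV, map_mul, gHom_EE2 a c Q hQ hchar hc hc0, gHom_eb02 a c Q hQ hc hc0, PX,
    mul_sub, mul_smul_comm, pe2_Al, pe2_Be, smul_zero, sub_zero]

include hchar in
lemma gHom_BV : gHom a c Q hQ hc hc0 (BV c Q) = PBe k := by
  rw [BV, map_mul, gHom_EE1 a c Q hQ hchar hc hc0, gHom_eb12 a c Q hQ hc hc0, PY,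
    mul_sub, mul_smul_comm, pe1_Be, pe1_Al, smul_zero, sub_zero]

lemma gh_id : (gHom a c Q hQ hc hc0).comp (hHom a c Q hQ hchar hc hc0) =
    AlgHom.id k (RingQuot (PathRel k)) := by
  apply RingQuot.ringQuot_ext'
  apply FreeAlgebra.hom_ext
  funext i
  show gHom a c Q hQ hc hc0 (hHom a c Q hQ hchar hc hc0 (RingQuot.mkAlgHom k _ (FreeAlgebra.ι k i)))
      = RingQuot.mkAlgHom k _ (FreeAlgebra.ι k i)
  rw [hHom, RingQuot.liftAlgHom_mkAlgHom_apply, FreeAlgebra.lift_ι_apply]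
  fin_cases i
  · show gHom a c Q hQ hc hc0 (gens c Q 0) = PE1 k
    simp only [gens, Matrix.cons_val_zero]; exact gHom_EE1 a c Q hQ hchar hc hc0
  · show gHom a c Q hQ hc hc0 (gens c Q 1) = PE2 k
    simp only [gens, Matrix.cons_val_one, Matrix.head_cons]
    exact gHom_EE2 a c Q hQ hchar hc hc0
  · show gHom a c Q hQ hc hc0 (gens c Q 2) = PAl k
    simp only [gens, Matrix.cons_val_two, Matrix.tail_cons, Matrix.head_cons]
    exact gHom_AV a c Q hQ hchar hc hc0
  · show gHom a c Q hQ hc hc0 (gens c Q 3) = PBe k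
    simp only [gens, Matrix.cons_val_three, Matrix.tail_cons, Matrix.head_cons]
    exact gHom_BV a c Q hQ hchar hc hc0

end Main

theorem stmt_4 (k : Type*) [Field k] [IsAlgClosed k] (hchar : (2 : k) ≠ 0)
    (a : Fin 2 → k) (ha : ∀ i, a i ≠ 0)
    (Q : QuadraticForm k (Fin 3 → k))
    (hQ : ∀ x : Fin 3 → k, Q x = a 0 * (x 0) ^ 2 + a 1 * (x 1) ^ 2) :
    Nonempty ((CliffordAlgebra.even Q) ≃ₐ[k] RingQuot (PathRel k)) := by
  obtain ⟨c, hc⟩ := IsAlgClosed.exists_pow_nat_eq (-(a 0 * a 1)) (n := 2) two_pos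
  have hc0 : c ≠ 0 := fun h => mul_ne_zero (ha 0) (ha 1)
    (by rw [h] at hc; simpa [neg_eq_zero] using hc.symm)
  exact ⟨AlgEquiv.ofAlgHom (gHom a c Q hQ hc hc0) (hHom a c Q hQ hchar hc hc0)
    (gh_id a c Q hQ hchar hc hc0) (hg_id a c Q hQ hchar hc hc0)⟩
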